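/- Let p(x) = a₀·x·a₁·x·a₂ ⋯ x·aₙ be a monomial of degree n over a division ring D (with fixed coefficients a₀,…,aₙ ∈ D). Then the n-th iterated Gâteaux derivative of p at any point x, evaluated with all increments equal to h, equals n!·p(h), i.e., ∂ⁿp(x)(h,…,h) = n!·p(h). -/

import Mathlib

open Filter Topology

variable {D : Type*} [NormedDivisionRing D] [NormedAlgebra ℝ D]

/-- The Gâteaux derivative of `f` at `x` in direction `h` (real directional derivative). -/
noncomputable def gateauxDeriv (f : D → D) (x h : D) : D :=
  limUnder (𝓝[≠] (0 : ℝ)) fun t : ℝ => t⁻¹ • (f (x + t • h) - f x)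

/-- The `n`-th iterated Gâteaux derivative of `f` at `x` with increments `hs 0, …, hs (n-1)`,
iterated in the base point: `∂ⁿf(x)(h₁;…;hₙ) = ∂(∂ⁿ⁻¹f(·)(h₁;…;hₙ₋₁))(x)(hₙ)`. -/
noncomputable def gateauxIter (f : D → D) : ℕ → (ℕ → D) → D → D
  | 0, _, x => f x
  | n + 1, hs, x => gateauxDeriv (fun y => gateauxIter f n hs y) x (hs n)

/-- The monomial `a₀·x·a₁·x·a₂ ⋯ x·aₙ` of degree `n`. -/
def monomial (a : ℕ → D) : ℕ → D → D
  | 0, _ => a 0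
  | n + 1, x => monomial a n x * x * a (n + 1)

/-- The multi-slot monomial `a₀·xs₀·a₁·xs₁ ⋯ xsₙ₋₁·aₙ`. -/
def mprod (a : ℕ → D) : ℕ → (ℕ → D) → D
  | 0, _ => a 0
  | n + 1, xs => mprod a n xs * xs n * a (n + 1)

lemma mprod_congr (a : ℕ → D) (n : ℕ) {xs ys : ℕ → D} (H : ∀ i < n, xs i = ys i) :
    mprod a n xs = mprod a n ys := by
  induction n with
  | zero => rfl
  | succ n ih =>
    simp only [mprod, ih fun i hi => H i (hi.trans n.lt_succ_self),
      H n n.lt_succ_self]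

lemma monomial_eq_mprod (a : ℕ → D) (n : ℕ) (x : D) :
    monomial a n x = mprod a n fun _ => x := by
  induction n with
  | zero => rfl
  | succ n ih => simp only [monomial, mprod, ih]

lemma gateauxDeriv_of_hasDerivAt {f : D → D} {x h d : D}
    (H : HasDerivAt (fun t : ℝ => f (x + t • h)) d 0) : gateauxDeriv f x h = d := by
  have := hasDerivAt_iff_tendsto_slope.mp H
  apply Filter.Tendsto.limUnder_eq
  refine this.congr fun t => ?_
  simp [slope_def_module]

lemma hasDerivAt_mprod (a : ℕ → D) (n : ℕ) (x h : D) (S : Finset ℕ) :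
    HasDerivAt (fun t : ℝ => mprod a n fun i => if i ∈ S then h else x + t • h)
      (∑ i ∈ Finset.range n \ S, mprod a n fun j => if j ∈ insert i S then h else x) 0 := by
  induction n with
  | zero => simpa [mprod] using hasDerivAt_const (0 : ℝ) (a 0)
  | succ n ih =>
    have hn : (n : ℕ) ∉ Finset.range n := Finset.notMem_range_self
    by_cases hS : n ∈ S
    · have key := (ih.mul_const h).mul_const (a (n + 1))
      have hset : Finset.range (n + 1) \ S = Finset.range n \ S := by
        rw [Finset.range_add_one, Finset.insert_sdiff_of_mem _ hS]
      have : (∑ i ∈ Finset.range n \ S,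
            mprod a n fun j => if j ∈ insert i S then h else x) * h * a (n + 1)
          = ∑ i ∈ Finset.range (n + 1) \ S,
            mprod a (n + 1) fun j => if j ∈ insert i S then h else x := by
        rw [hset, Finset.sum_mul, Finset.sum_mul]
        refine Finset.sum_congr rfl fun i hi => ?_
        have : n ∈ insert i S := Finset.mem_insert_of_mem hS
        simp only [mprod, if_pos this]
      rw [this] at key
      refine key.congr_of_eventuallyEq (Eventually.of_forall fun t => ?_)
      simp only [mprod, if_pos hS]
    · have hg : HasDerivAt (fun t : ℝ => x + t • h) h 0 := by
        simpa using ((hasDerivAt_id (0 : ℝ)).smul_const h).const_add x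
      have hg' : HasDerivAt (fun t : ℝ => if n ∈ S then h else x + t • h) h 0 := by
        simpa only [if_neg hS] using hg
      have key := (ih.mul hg').mul_const (a (n + 1))
      simp only [if_neg hS, zero_smul, add_zero] at key
      have hset : Finset.range (n + 1) \ S = insert n (Finset.range n \ S) := by
        rw [Finset.range_add_one, Finset.insert_sdiff_of_notMem _ hS]
      have heq : ((∑ i ∈ Finset.range n \ S,
              mprod a n fun j => if j ∈ insert i S then h else x) * x +
            (mprod a n fun i => if i ∈ S then h else x) * h) * a (n + 1)
          = ∑ i ∈ Finset.range (n + 1) \ S,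
            mprod a (n + 1) fun j => if j ∈ insert i S then h else x := by
        rw [hset, Finset.sum_insert (by simp [hn])]
        have hterm : (mprod a (n + 1) fun j => if j ∈ insert n S then h else x)
            = (mprod a n fun i => if i ∈ S then h else x) * h * a (n + 1) := by
          simp only [mprod, if_pos (Finset.mem_insert_self n S)]
          congr 2
          refine mprod_congr a n fun i hi => ?_
          by_cases hiS : i ∈ S
          · rw [if_pos (Finset.mem_insert_of_mem hiS), if_pos hiS]
          · rw [if_neg hiS, if_neg (fun hmem => ?_)]
            rcases Finset.mem_insert.mp hmem with h' | h'
            · omega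
            · exact hiS h'
        rw [hterm]
        have hsum : ∑ i ∈ Finset.range n \ S,
              (mprod a (n + 1) fun j => if j ∈ insert i S then h else x)
            = (∑ i ∈ Finset.range n \ S,
              mprod a n fun j => if j ∈ insert i S then h else x) * x * a (n + 1) := by
          rw [Finset.sum_mul, Finset.sum_mul]
          refine Finset.sum_congr rfl fun i hi => ?_
          have hi' : i ∈ Finset.range n := (Finset.mem_sdiff.mp hi).1
          have hiS : i ∉ S := (Finset.mem_sdiff.mp hi).2
          have : n ∉ insert i S := by
            simp only [Finset.mem_insert]
            push_neg
            exact ⟨by have := Finset.mem_range.mp hi'; omega, hS⟩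
          simp only [mprod, if_neg this]
        rw [hsum, add_mul]
        exact add_comm _ _
      rw [heq] at key
      refine key.congr_of_eventuallyEq (Eventually.of_forall fun t => ?_)
      simp only [mprod, if_neg hS, Pi.mul_apply]

lemma double_count {M : Type*} [AddCommMonoid M] (n k : ℕ) (v : Finset ℕ → M) :
    ∑ S ∈ (Finset.range n).powersetCard k, ∑ i ∈ Finset.range n \ S, v (insert i S)
      = ∑ T ∈ (Finset.range n).powersetCard (k + 1), (k + 1) • v T := by
  have hconst : ∀ T ∈ (Finset.range n).powersetCard (k + 1), (k + 1) • v T = ∑ _i ∈ T, v T := by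
    intro T hT
    rw [Finset.sum_const, (Finset.mem_powersetCard.mp hT).2]
  rw [Finset.sum_congr rfl hconst,
    Finset.sum_sigma' ((Finset.range n).powersetCard k) (fun S => Finset.range n \ S)
      (fun S i => v (insert i S)),
    Finset.sum_sigma' ((Finset.range n).powersetCard (k + 1)) (fun T => T) (fun T _ => v T)]
  refine Finset.sum_nbij' (fun p => ⟨insert p.2 p.1, p.2⟩) (fun p => ⟨p.1.erase p.2, p.2⟩)
    ?_ ?_ ?_ ?_ ?_
  · rintro ⟨S, i⟩ hp
    simp only [Finset.mem_sigma, Finset.mem_powersetCard, Finset.mem_sdiff] at hp ⊢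
    obtain ⟨⟨hSsub, hScard⟩, hirange, hiS⟩ := hp
    refine ⟨⟨Finset.insert_subset hirange hSsub, ?_⟩, Finset.mem_insert_self _ _⟩
    rw [Finset.card_insert_of_notMem hiS, hScard]
  · rintro ⟨T, i⟩ hp
    simp only [Finset.mem_sigma, Finset.mem_powersetCard, Finset.mem_sdiff] at hp ⊢
    obtain ⟨⟨hTsub, hTcard⟩, hiT⟩ := hp
    refine ⟨⟨(Finset.erase_subset _ _).trans hTsub, ?_⟩, hTsub hiT, Finset.notMem_erase _ _⟩
    rw [Finset.card_erase_of_mem hiT, hTcard]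
    omega
  · rintro ⟨S, i⟩ hp
    simp only [Finset.mem_sigma, Finset.mem_sdiff] at hp
    simp [Finset.erase_insert hp.2.2]
  · rintro ⟨T, i⟩ hp
    simp only [Finset.mem_sigma] at hp
    simp [Finset.insert_erase hp.2]
  · rintro ⟨S, i⟩ hp
    rfl

lemma gateaux_iter_mprod (a : ℕ → D) (n : ℕ) (h : D) (k : ℕ) :
    ∀ x : D, gateauxIter (monomial a n) k (fun _ => h) x
      = ∑ S ∈ (Finset.range n).powersetCard k,
          k.factorial • mprod a n fun i => if i ∈ S then h else x := by
  induction k with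
  | zero =>
    intro x
    simp only [gateauxIter, Finset.powersetCard_zero, Finset.sum_singleton,
      Nat.factorial_zero, one_smul, Finset.notMem_empty, if_false]
    exact monomial_eq_mprod a n x
  | succ k ih =>
    intro x
    show gateauxDeriv (fun y => gateauxIter (monomial a n) k (fun _ => h) y) x h = _
    have hfun : (fun y => gateauxIter (monomial a n) k (fun _ => h) y)
        = fun y => ∑ S ∈ (Finset.range n).powersetCard k,
            k.factorial • mprod a n fun i => if i ∈ S then h else y := funext ih
    rw [hfun]
    have hder : HasDerivAt (fun t : ℝ => ∑ S ∈ (Finset.range n).powersetCard k,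
          k.factorial • mprod a n fun i => if i ∈ S then h else x + t • h)
        (∑ S ∈ (Finset.range n).powersetCard k, k.factorial •
          ∑ i ∈ Finset.range n \ S, mprod a n fun j => if j ∈ insert i S then h else x) 0 := by
      apply HasDerivAt.fun_sum
      intro S _
      simpa only [nsmul_eq_mul] using (hasDerivAt_mprod a n x h S).const_mul
        ((k.factorial : D))
    rw [gateauxDeriv_of_hasDerivAt hder]
    rw [← Finset.smul_sum, double_count n k
      (fun S => mprod a n fun i => if i ∈ S then h else x), Finset.smul_sum]
    refine Finset.sum_congr rfl fun T _ => ?_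
    rw [smul_smul, Nat.factorial_succ, Nat.mul_comm]

theorem gateaux_iter_monomial_diag (a : ℕ → D) (n : ℕ) (x h : D) :
    gateauxIter (monomial a n) n (fun _ => h) x = n.factorial • monomial a n h := by
  rw [gateaux_iter_mprod a n h n x]
  have : (Finset.range n).powersetCard n = {Finset.range n} := by
    simpa using Finset.powersetCard_self (Finset.range n)
  rw [this, Finset.sum_singleton, monomial_eq_mprod]
  congr 1
  exact mprod_congr a n fun i hi => by simp [Finset.mem_range.mpr hi]
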